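/- For any graph H with at least one edge and with chromatic index c, cms(H) ≥ ⌊|E(H)|/(2c)⌋ − 1. -/

import Mathlib

open SimpleGraph

/-- Two edges are adjacent if they are distinct and share a vertex. -/
def EdgesAdj {V : Type*} (e e' : Sym2 V) : Prop :=
  e ≠ e' ∧ ∃ v : V, v ∈ e ∧ v ∈ e'

/-- `ms` of an ordering of a graph, the ordering being given as the list of edges
in increasing label order: the largest `s ∈ {1,…,m}` such that any ordered pair of
adjacent edges `(e,e')` with `ℓ(e) < ℓ(e')` has forward distance at least `s`. -/
noncomputable def msList {V : Type*} (L : List (Sym2 V)) : ℕ :=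
  sSup {s | 1 ≤ s ∧ s ≤ L.length ∧ ∀ i j e e', i < j →
    L[i]? = some e → L[j]? = some e' → EdgesAdj e e' → s ≤ j - i}

/-- `cms` of an ordering of a graph: the largest `s ∈ {1,…,m}` such that every pair of
adjacent edges is at cyclic distance at least `s`. -/
noncomputable def cmsList {V : Type*} (L : List (Sym2 V)) : ℕ :=
  sSup {s | 1 ≤ s ∧ s ≤ L.length ∧ ∀ i j e e', i < j →
    L[i]? = some e → L[j]? = some e' → EdgesAdj e e' →
    s ≤ min (j - i) (L.length - (j - i))}

/-- `L` is an ordering of `G`: it lists every edge of `G` exactly once. -/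
def IsOrdering {V : Type*} (G : SimpleGraph V) (L : List (Sym2 V)) : Prop :=
  L.Nodup ∧ ∀ e, e ∈ L ↔ e ∈ G.edgeSet

/-- Cyclic matching sequenceability of a graph: the maximum of `cmsList` over orderings. -/
noncomputable def cms {V : Type*} (G : SimpleGraph V) : ℕ :=
  sSup {k | ∃ L, IsOrdering G L ∧ cmsList L = k}

/-- Number of edges of a graph. -/
noncomputable def numEdges {V : Type*} (G : SimpleGraph V) : ℕ :=
  Nat.card G.edgeSet

/-- The chromatic index: the least number of colours in a proper edge colouring. -/
noncomputable def chromaticIndex {V : Type*} (G : SimpleGraph V) : ℕ :=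
  sInf {c | ∃ f : G.edgeSet → Fin c, ∀ e e' : G.edgeSet, EdgesAdj e.1 e'.1 → f e ≠ f e'}

/-- The edge set of `G` forms a matching (no two distinct edges share a vertex). -/
def IsMatchingGraph {V : Type*} (G : SimpleGraph V) : Prop :=
  ∀ e ∈ G.edgeSet, ∀ e' ∈ G.edgeSet, ¬ EdgesAdj e e'

/-- `G` is regular of degree `d`. -/
def IsRegularGraph {V : Type*} (G : SimpleGraph V) (d : ℕ) : Prop :=
  ∀ v : V, Nat.card (G.neighborSet v) = d

/-- A finite set of edges of `G` forming a matching. -/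
def IsMatchingSet {V : Type*} (G : SimpleGraph V) (M : Finset (Sym2 V)) : Prop :=
  ↑M ⊆ G.edgeSet ∧ ∀ e ∈ M, ∀ e' ∈ M, ¬ EdgesAdj e e'

/-- The matching number of a graph. -/
noncomputable def matchingNumber {V : Type*} (G : SimpleGraph V) : ℕ :=
  sSup {k | ∃ M : Finset (Sym2 V), IsMatchingSet G M ∧ M.card = k}

namespace CMSAux


attribute [local instance] Classical.propDecidable

variable {V : Type*}

lemma edgesAdj_symm {e e' : Sym2 V} (h : EdgesAdj e e') : EdgesAdj e' e := by
  obtain ⟨hne, v, h1, h2⟩ := h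
  exact ⟨hne.symm, v, h2, h1⟩

/-- A finset of edges which is a matching. -/
def IsM (B : Finset (Sym2 V)) : Prop := ∀ e ∈ B, ∀ e' ∈ B, ¬ EdgesAdj e e'

lemma card_mem_le_one (B : Finset (Sym2 V)) (hB : IsM B) (w : V) :
    (B.filter fun x => w ∈ x).card ≤ 1 := by
  apply Finset.card_le_one.mpr
  intro a ha b hb
  simp only [Finset.mem_filter] at ha hb
  by_contra hne
  exact hB a ha.1 b hb.1 ⟨hne, w, ha.2, hb.2⟩

lemma card_adj_le_two (B : Finset (Sym2 V)) (hB : IsM B) (f : Sym2 V) :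
    (B.filter fun x => EdgesAdj x f).card ≤ 2 := by
  induction f using Sym2.ind with
  | _ u v =>
    have h1 : (B.filter fun x => EdgesAdj x s(u,v)) ⊆
        (B.filter fun x => u ∈ x) ∪ (B.filter fun x => v ∈ x) := by
      intro x hx
      simp only [Finset.mem_filter, Finset.mem_union] at *
      obtain ⟨hxB, _, w, hw1, hw2⟩ := hx
      rcases Sym2.mem_iff.mp hw2 with h | h
      · exact Or.inl ⟨hxB, h ▸ hw1⟩
      · exact Or.inr ⟨hxB, h ▸ hw1⟩
    calc (B.filter fun x => EdgesAdj x s(u,v)).card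
        ≤ ((B.filter fun x => u ∈ x) ∪ (B.filter fun x => v ∈ x)).card :=
          Finset.card_le_card h1
      _ ≤ (B.filter fun x => u ∈ x).card + (B.filter fun x => v ∈ x).card :=
          Finset.card_union_le _ _
      _ ≤ 2 := by
          have := card_mem_le_one B hB u
          have := card_mem_le_one B hB v
          omega


/-- Placement of a matching in a block with lower-index constraints `l`
and upper (from-the-end) constraints `u`. -/
lemma placement (B : Finset (Sym2 V)) (k : ℕ) (hk : 2 ≤ k)
    (hcard : 2 * k - 1 ≤ B.card)
    (l u : Sym2 V → ℕ)
    (hl1 : ∀ x ∈ B, l x ≤ k - 2) (hu1 : ∀ x ∈ B, u x ≤ k - 2)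
    (hl2 : ∀ ρ, 1 ≤ ρ → (B.filter fun x => ρ ≤ l x).card ≤ 2 * (k - 1 - ρ))
    (hu2 : ∀ ρ, 1 ≤ ρ → (B.filter fun x => ρ ≤ u x).card ≤ 2 * (k - 1 - ρ)) :
    ∃ Q : List (Sym2 V), Q.Nodup ∧ Q.toFinset = B ∧ Q.length = B.card ∧
      ∀ (a : ℕ) (ha : a < Q.length), l Q[a] ≤ a ∧ u Q[a] ≤ Q.length - 1 - a := by
  classical
  set n := B.card with hn
  have hn3 : 3 ≤ n := by omega
  -- Hall condition
  have hall : ∀ s : Finset {x // x ∈ B},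
      s.card ≤ (s.biUnion fun x => Finset.Icc (l x.1) (n - 1 - u x.1)).card := by
    intro s
    rcases s.eq_empty_or_nonempty with rfl | hs
    · simp
    · have hsl : (s.image fun x => l x.1).Nonempty := hs.image _
      have hsu : (s.image fun x => u x.1).Nonempty := hs.image _
      set a := (s.image fun x => l x.1).min' hsl with ha
      set u₀ := (s.image fun x => u x.1).min' hsu with hu₀
      obtain ⟨xa, hxa, hxal⟩ : ∃ x ∈ s, l x.1 = a := by
        obtain ⟨y, hy, hyl⟩ := Finset.mem_image.mp ((s.image fun x => l x.1).min'_mem hsl)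
        exact ⟨y, hy, hyl⟩
      obtain ⟨xu, hxu, hxuu⟩ : ∃ x ∈ s, u x.1 = u₀ := by
        obtain ⟨y, hy, hyl⟩ := Finset.mem_image.mp ((s.image fun x => u x.1).min'_mem hsu)
        exact ⟨y, hy, hyl⟩
      have hak : a ≤ k - 2 := hxal ▸ hl1 xa.1 xa.2
      have huk : u₀ ≤ k - 2 := hxuu ▸ hu1 xu.1 xu.2
      have hcover : Finset.Icc a (n - 1 - u₀) ⊆
          s.biUnion fun x => Finset.Icc (l x.1) (n - 1 - u x.1) := by
        intro v hv
        rw [Finset.mem_Icc] at hv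
        by_cases hcase : v ≤ n - 1 - u xa.1
        · exact Finset.mem_biUnion.mpr ⟨xa, hxa, Finset.mem_Icc.mpr ⟨hxal ▸ hv.1, hcase⟩⟩
        · have hua : u xa.1 ≤ k - 2 := hu1 xa.1 xa.2
          have hlu : l xu.1 ≤ k - 2 := hl1 xu.1 xu.2
          refine Finset.mem_biUnion.mpr ⟨xu, hxu, Finset.mem_Icc.mpr ⟨?_, ?_⟩⟩
          · omega
          · rw [hxuu]; exact hv.2
      have hbig : n - u₀ - a ≤ (s.biUnion fun x => Finset.Icc (l x.1) (n - 1 - u x.1)).card := by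
        have := Finset.card_le_card hcover
        rw [Nat.card_Icc] at this
        omega
      -- bound s.card
      have hsub : ∀ ρ, 1 ≤ ρ → ρ ≤ a → s.card ≤ 2 * (k - 1 - ρ) := by
        intro ρ hρ1 hρa
        have : s.card ≤ (B.filter fun x => ρ ≤ l x).card := by
          apply Finset.card_le_card_of_injOn (fun x => x.1)
          · intro x hx
            refine Finset.mem_filter.mpr ⟨x.2, ?_⟩
            have : a ≤ l x.1 := Finset.min'_le _ _ (Finset.mem_image_of_mem _ hx)
            exact le_trans hρa this
          · exact fun x _ y _ h => Subtype.ext h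
        exact le_trans this (hl2 ρ hρ1)
      have hsubu : ∀ ρ, 1 ≤ ρ → ρ ≤ u₀ → s.card ≤ 2 * (k - 1 - ρ) := by
        intro ρ hρ1 hρa
        have : s.card ≤ (B.filter fun x => ρ ≤ u x).card := by
          apply Finset.card_le_card_of_injOn (fun x => x.1)
          · intro x hx
            refine Finset.mem_filter.mpr ⟨x.2, ?_⟩
            have : u₀ ≤ u x.1 := Finset.min'_le _ _ (Finset.mem_image_of_mem _ hx)
            exact le_trans hρa this
          · exact fun x _ y _ h => Subtype.ext h
        exact le_trans this (hu2 ρ hρ1)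
      have hcardall : s.card ≤ n := by
        have := Finset.card_le_univ s
        simpa [Fintype.card_coe] using this
      rcases Nat.eq_zero_or_pos a with ha0 | hapos
      · rcases Nat.eq_zero_or_pos u₀ with hu00 | hupos
        · omega
        · have := hsubu u₀ hupos le_rfl
          omega
      · rcases Nat.eq_zero_or_pos u₀ with hu00 | hupos
        · have := hsub a hapos le_rfl
          omega
        · have h1 := hsub a hapos le_rfl
          have h2 := hsubu u₀ hupos le_rfl
          omega
  obtain ⟨f, hfinj, hf⟩ :=
    (Finset.all_card_le_biUnion_card_iff_exists_injective
      (fun x : {x // x ∈ B} => Finset.Icc (l x.1) (n - 1 - u x.1))).mp hall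
  have hfmem : ∀ x : {x // x ∈ B}, l x.1 ≤ f x ∧ f x ≤ n - 1 - u x.1 := by
    intro x; exact Finset.mem_Icc.mp (hf x)
  have hflt : ∀ x, f x < n := by
    intro x
    have := (hfmem x).2
    omega
  let e : {x // x ∈ B} → Fin n := fun x => ⟨f x, hflt x⟩
  have hebij : Function.Bijective e := by
    rw [Fintype.bijective_iff_injective_and_card]
    constructor
    · intro x y hxy
      apply hfinj
      simpa [e, Fin.ext_iff] using hxy
    · simp [Fintype.card_coe, hn]
  let Eqv := Equiv.ofBijective e hebij
  have hnd : (List.ofFn fun v : Fin n => (Eqv.symm v).1).Nodup := by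
    rw [List.nodup_ofFn]
    intro x y hxy
    exact Eqv.symm.injective (Subtype.ext hxy)
  refine ⟨List.ofFn (fun v : Fin n => (Eqv.symm v).1), hnd, ?_, ?_, ?_⟩
  · apply Finset.eq_of_subset_of_card_le
    · intro x hx
      rw [List.mem_toFinset, List.mem_ofFn] at hx
      obtain ⟨v, rfl⟩ := hx
      exact (Eqv.symm v).2
    · rw [List.toFinset_card_of_nodup hnd]
      simp [hn]
  · simp
  · intro a ha
    simp only [List.length_ofFn] at ha
    have hget : (List.ofFn (fun v : Fin n => (Eqv.symm v).1))[a] = (Eqv.symm ⟨a, ha⟩).1 := by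
      simp
    rw [hget]
    set x := Eqv.symm ⟨a, ha⟩
    have hex : e x = ⟨a, ha⟩ := Eqv.apply_symm_apply ⟨a, ha⟩
    have hfx : f x = a := by
      have := congrArg Fin.val hex
      simpa [e] using this
    have h1 := (hfmem x).1
    have h2 := (hfmem x).2
    have hu' : u x.1 ≤ k - 2 := hu1 x.1 x.2
    simp only [List.length_ofFn]
    omega

lemma no_three_adj (B : Finset (Sym2 V)) (hB : IsM B) (f : Sym2 V)
    (x₁ x₂ x₃ : Sym2 V) (h1 : x₁ ∈ B) (h2 : x₂ ∈ B) (h3 : x₃ ∈ B)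
    (h12 : x₁ ≠ x₂) (h13 : x₁ ≠ x₃) (h23 : x₂ ≠ x₃)
    (a1 : EdgesAdj x₁ f) (a2 : EdgesAdj x₂ f) (a3 : EdgesAdj x₃ f) : False := by
  have hsub : {x₁, x₂, x₃} ⊆ B.filter fun x => EdgesAdj x f := by
    intro z hz
    simp only [Finset.mem_insert, Finset.mem_singleton] at hz
    rcases hz with rfl | rfl | rfl <;> exact Finset.mem_filter.mpr (by tauto)
  have hcard : ({x₁, x₂, x₃} : Finset (Sym2 V)).card = 3 := by
    rw [Finset.card_insert_of_notMem (by simp [h12, h13]),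
      Finset.card_insert_of_notMem (by simp [h23]), Finset.card_singleton]
  have := Finset.card_le_card hsub
  have := card_adj_le_two B hB f
  omega

/-- The swap lemma: given two disjoint matchings whose sizes differ by at least 2,
we can repartition their union into two matchings with sizes one step closer. -/
lemma swap (M N : Finset (Sym2 V)) (hM : IsM M) (hN : IsM N)
    (hdisj : Disjoint M N) (hMN : N.card + 2 ≤ M.card) :
    ∃ M' N' : Finset (Sym2 V), IsM M' ∧ IsM N' ∧ Disjoint M' N' ∧
      M' ∪ N' = M ∪ N ∧ M'.card = M.card - 1 ∧ N'.card = N.card + 1 := by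
  classical
  set U : Finset (Sym2 V) := M ∪ N with hU
  let G' : SimpleGraph (Sym2 V) :=
    { Adj := fun x y => x ∈ U ∧ y ∈ U ∧ EdgesAdj x y
      symm := by
        constructor
        rintro x y ⟨hx, hy, hne, v, hv1, hv2⟩
        exact ⟨hy, hx, hne.symm, v, hv2, hv1⟩
      loopless := by constructor; rintro x ⟨_, _, hne, _⟩; exact hne rfl }
  let C : Sym2 V → Finset (Sym2 V) := fun x => U.filter fun y => G'.Reachable x y
  have hCmem : ∀ x ∈ U, x ∈ C x := fun x hx => Finset.mem_filter.mpr ⟨hx, .refl x⟩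
  have hCsub : ∀ x, C x ⊆ U := fun x => Finset.filter_subset _ _
  have hCeq : ∀ x y, y ∈ C x → C x = C y := by
    intro x y hy
    have hr : G'.Reachable x y := (Finset.mem_filter.mp hy).2
    ext z
    simp only [C, Finset.mem_filter, and_congr_right_iff]
    intro _
    exact ⟨fun h => hr.symm.trans h, fun h => hr.trans h⟩
  have hCclosed : ∀ x y z, y ∈ C x → G'.Adj y z → z ∈ C x := by
    intro x y z hy hadj
    have hr : G'.Reachable x y := (Finset.mem_filter.mp hy).2
    exact Finset.mem_filter.mpr ⟨hadj.2.1, hr.trans hadj.reachable⟩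
  -- the representatives
  set reps := U.image C with hreps
  have hpair : ∀ A ∈ reps, ∀ A' ∈ reps, A ≠ A' → Disjoint A A' := by
    intro A hA A' hA' hne
    obtain ⟨x, hx, rfl⟩ := Finset.mem_image.mp hA
    obtain ⟨y, hy, rfl⟩ := Finset.mem_image.mp hA'
    rw [Finset.disjoint_left]
    intro z hz hz'
    exact hne ((hCeq x z hz).trans (hCeq y z hz').symm)
  have hcardsplit : ∀ P : Finset (Sym2 V), P ⊆ U →
      P.card = ∑ A ∈ reps, (P ∩ A).card := by
    intro P hP
    have hPeq : P = reps.biUnion fun A => P ∩ A := by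
      ext z
      simp only [Finset.mem_biUnion, Finset.mem_inter]
      constructor
      · intro hz
        exact ⟨C z, Finset.mem_image_of_mem C (hP hz), hz, hCmem z (hP hz)⟩
      · rintro ⟨A, -, hz, -⟩; exact hz
    conv_lhs => rw [hPeq]
    exact Finset.card_biUnion fun A hA A' hA' hne =>
      (hpair A hA A' hA' hne).mono Finset.inter_subset_right Finset.inter_subset_right
  have hMsum := hcardsplit M Finset.subset_union_left
  have hNsum := hcardsplit N Finset.subset_union_right
  -- find a component with surplus
  have hexA : ∃ A ∈ reps, (N ∩ A).card + 1 ≤ (M ∩ A).card := by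
    by_contra hcon
    push_neg at hcon
    have : ∑ A ∈ reps, (M ∩ A).card ≤ ∑ A ∈ reps, (N ∩ A).card :=
      Finset.sum_le_sum fun A hA => by have := hcon A hA; omega
    omega
  obtain ⟨A, hAreps, hsurplus⟩ := hexA
  -- pick a root in M ∩ A
  have hMA : (M ∩ A).Nonempty := Finset.card_pos.mp (by omega)
  obtain ⟨x₀, hx₀⟩ := hMA
  have hx₀M : x₀ ∈ M := (Finset.mem_inter.mp hx₀).1
  have hx₀A : x₀ ∈ A := (Finset.mem_inter.mp hx₀).2
  obtain ⟨w, hwU, hAC⟩ := Finset.mem_image.mp hAreps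
  have hAx₀ : A = C x₀ := by rw [← hAC]; exact hCeq w x₀ (hAC ▸ hx₀A)
  -- parent function
  have hparent : ∀ y ∈ A, y ≠ x₀ → ∃ p, G'.Adj p y ∧ p ∈ A ∧
      G'.dist x₀ p + 1 = G'.dist x₀ y := by
    intro y hyA hyne
    have hyr : G'.Reachable x₀ y := (Finset.mem_filter.mp (hAx₀ ▸ hyA)).2
    obtain ⟨wk, hwk⟩ := hyr.exists_walk_length_eq_dist
    have hdpos : 0 < G'.dist x₀ y := hyr.pos_dist_of_ne (Ne.symm hyne)
    set wr := wk.reverse with hwr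
    have hwrlen : wr.length = G'.dist x₀ y := by
      rw [hwr, SimpleGraph.Walk.length_reverse, hwk]
    cases hw : wr with
    | nil =>
        exfalso
        rw [hw] at hwrlen
        simp at hwrlen
        simp at hdpos
    | @cons _ p _ hadj q =>
        have hqlen : q.length + 1 = G'.dist x₀ y := by
          rw [hw] at hwrlen
          simpa using hwrlen
        have hdistp : G'.dist x₀ p ≤ q.length := by
          have := SimpleGraph.dist_le q.reverse
          simpa using this
        have hdisty : G'.dist x₀ y ≤ G'.dist x₀ p + 1 := by
          obtain ⟨wp, hwp⟩ := (q.reverse.reachable).exists_walk_length_eq_dist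
          have := SimpleGraph.dist_le (wp.concat hadj.symm)
          rw [SimpleGraph.Walk.length_concat, hwp] at this
          exact this
        refine ⟨p, hadj.symm, ?_, by omega⟩
        · rw [hAx₀]
          exact hCclosed x₀ y p (hAx₀ ▸ hyA) hadj
  choose! par hpar1 hpar2 hpar3 using hparent
  -- injection (M ∩ A).erase x₀ → N ∩ A
  have hAU : ∀ y ∈ A, y ∈ U := fun y hy => hCsub _ (hAx₀ ▸ hy)
  have hbip : ∀ y z, G'.Adj y z → y ∈ M → z ∈ N := by
    intro y z hadj hyM
    rcases Finset.mem_union.mp hadj.2.1 with h | h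
    · exact absurd hadj.2.2 (hM y hyM z h)
    · exact h
  have hinj : Set.InjOn (fun y => par y) ((M ∩ A).erase x₀) := by
    intro y hy y' hy' heq
    by_contra hne
    simp only [Finset.coe_erase, Set.mem_diff, Finset.mem_coe, Finset.mem_inter,
      Set.mem_singleton_iff] at hy hy'
    obtain ⟨⟨hyM, hyA⟩, hyne⟩ := hy
    obtain ⟨⟨hy'M, hy'A⟩, hy'ne⟩ := hy'
    have heq' : par y = par y' := heq
    have hadj1 : G'.Adj (par y) y := hpar1 y hyA hyne
    have hadj2 : G'.Adj (par y) y' := by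
      rw [heq']
      exact hpar1 y' hy'A hy'ne
    have hgA : par y ∈ A := hpar2 y hyA hyne
    have hgN : par y ∈ N := hbip y (par y) (hadj1.symm) hyM
    have hgne : par y ≠ x₀ := fun h => hdisj.forall_ne_finset hx₀M (h ▸ hgN) rfl
    -- parent of (par y)
    have hpg1 : G'.Adj (par (par y)) (par y) := hpar1 (par y) hgA hgne
    have hpgM : par (par y) ∈ M := by
      rcases Finset.mem_union.mp hpg1.1 with h | h
      · exact h
      · exact absurd hpg1.2.2 (hN (par (par y)) h (par y) hgN)
    -- distances
    have hd1 : G'.dist x₀ (par y) + 1 = G'.dist x₀ y := hpar3 y hyA hyne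
    have hd2 : G'.dist x₀ (par y) + 1 = G'.dist x₀ y' := by
      rw [heq']
      exact hpar3 y' hy'A hy'ne
    have hd3 : G'.dist x₀ (par (par y)) + 1 = G'.dist x₀ (par y) := hpar3 (par y) hgA hgne
    have hpgy : par (par y) ≠ y := fun h => by rw [h] at hd3; omega
    have hpgy' : par (par y) ≠ y' := fun h => by rw [h] at hd3; omega
    exact no_three_adj M hM (par y) y y' (par (par y)) hyM hy'M hpgM hne hpgy.symm hpgy'.symm
      hadj1.symm.2.2 hadj2.symm.2.2 hpg1.2.2
  have hinto : ∀ y ∈ (M ∩ A).erase x₀, par y ∈ N ∩ A := by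
    intro y hy
    have hyne := Finset.ne_of_mem_erase hy
    have hymem := Finset.mem_of_mem_erase hy
    have hyM := (Finset.mem_inter.mp hymem).1
    have hyA := (Finset.mem_inter.mp hymem).2
    have hadj : G'.Adj (par y) y := hpar1 y hyA hyne
    exact Finset.mem_inter.mpr ⟨hbip y (par y) hadj.symm hyM, hpar2 y hyA hyne⟩
  have hcardle : (M ∩ A).card - 1 ≤ (N ∩ A).card := by
    have := Finset.card_le_card_of_injOn (fun y => par y)
      (fun y hy => hinto y hy) hinj
    rw [Finset.card_erase_of_mem hx₀] at this
    exact this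
  have hexact : (M ∩ A).card = (N ∩ A).card + 1 := by omega
  -- define the swap
  refine ⟨(M \ A) ∪ (N ∩ A), (N \ A) ∪ (M ∩ A), ?_, ?_, ?_, ?_, ?_, ?_⟩
  · -- IsM M'
    intro e he e' he' hadj
    rw [Finset.mem_union] at he he'
    have key : ∀ a b, a ∈ M \ A → b ∈ N ∩ A → ¬ EdgesAdj a b := by
      intro a b ha hb hab
      obtain ⟨haM, haA⟩ := Finset.mem_sdiff.mp ha
      obtain ⟨hbN, hbA⟩ := Finset.mem_inter.mp hb
      have : G'.Adj b a := ⟨Finset.mem_union_right _ hbN, Finset.mem_union_left _ haM,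
        ⟨hab.1.symm, hab.2.imp fun v hv => ⟨hv.2, hv.1⟩⟩⟩
      exact haA (hAx₀ ▸ hCclosed x₀ b a (hAx₀ ▸ hbA) this)
    rcases he with he | he <;> rcases he' with he' | he'
    · exact hM e (Finset.mem_sdiff.mp he).1 e' (Finset.mem_sdiff.mp he').1 hadj
    · exact key e e' he he' hadj
    · exact (key e' e he' he) (edgesAdj_symm hadj)
    · exact hN e (Finset.mem_inter.mp he).1 e' (Finset.mem_inter.mp he').1 hadj
  · -- IsM N'
    intro e he e' he' hadj
    rw [Finset.mem_union] at he he'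
    have key : ∀ a b, a ∈ N \ A → b ∈ M ∩ A → ¬ EdgesAdj a b := by
      intro a b ha hb hab
      obtain ⟨haN, haA⟩ := Finset.mem_sdiff.mp ha
      obtain ⟨hbM, hbA⟩ := Finset.mem_inter.mp hb
      have : G'.Adj b a := ⟨Finset.mem_union_left _ hbM, Finset.mem_union_right _ haN,
        ⟨hab.1.symm, hab.2.imp fun v hv => ⟨hv.2, hv.1⟩⟩⟩
      exact haA (hAx₀ ▸ hCclosed x₀ b a (hAx₀ ▸ hbA) this)
    rcases he with he | he <;> rcases he' with he' | he'
    · exact hN e (Finset.mem_sdiff.mp he).1 e' (Finset.mem_sdiff.mp he').1 hadj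
    · exact key e e' he he' hadj
    · exact (key e' e he' he) (edgesAdj_symm hadj)
    · exact hM e (Finset.mem_inter.mp he).1 e' (Finset.mem_inter.mp he').1 hadj
  · rw [Finset.disjoint_left]
    intro z hz hz'
    rcases Finset.mem_union.mp hz with h | h <;> rcases Finset.mem_union.mp hz' with h' | h'
    · exact hdisj.forall_ne_finset (Finset.mem_sdiff.mp h).1 (Finset.mem_sdiff.mp h').1 rfl
    · exact (Finset.mem_sdiff.mp h).2 (Finset.mem_inter.mp h').2
    · exact (Finset.mem_sdiff.mp h').2 (Finset.mem_inter.mp h).2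
    · exact hdisj.forall_ne_finset (Finset.mem_inter.mp h').1 (Finset.mem_inter.mp h).1 rfl
  · apply Finset.Subset.antisymm
    · intro z hz
      simp only [hU, Finset.mem_union, Finset.mem_sdiff, Finset.mem_inter] at hz ⊢
      rcases hz with (⟨h, -⟩ | ⟨h, -⟩) | (⟨h, -⟩ | ⟨h, -⟩)
      · exact Or.inl h
      · exact Or.inr h
      · exact Or.inr h
      · exact Or.inl h
    · intro z hz
      simp only [hU, Finset.mem_union, Finset.mem_sdiff, Finset.mem_inter] at hz ⊢
      by_cases hzA : z ∈ A
      · rcases hz with h | h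
        · exact Or.inr (Or.inr ⟨h, hzA⟩)
        · exact Or.inl (Or.inr ⟨h, hzA⟩)
      · rcases hz with h | h
        · exact Or.inl (Or.inl ⟨h, hzA⟩)
        · exact Or.inr (Or.inl ⟨h, hzA⟩)
  · have hd : Disjoint (M \ A) (N ∩ A) := by
      rw [Finset.disjoint_left]
      intro z hz hz'
      exact hdisj.forall_ne_finset (Finset.mem_sdiff.mp hz).1 (Finset.mem_inter.mp hz').1 rfl
    rw [Finset.card_union_of_disjoint hd]
    have h1 : M \ A = M \ (M ∩ A) := (Finset.sdiff_inter_self_left M A).symm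
    have h2 : (M ∩ A).card ≤ M.card := Finset.card_le_card Finset.inter_subset_left
    rw [h1, Finset.card_sdiff_of_subset Finset.inter_subset_left]
    omega
  · have hd : Disjoint (N \ A) (M ∩ A) := by
      rw [Finset.disjoint_left]
      intro z hz hz'
      exact hdisj.forall_ne_finset (Finset.mem_inter.mp hz').1 (Finset.mem_sdiff.mp hz).1 rfl
    rw [Finset.card_union_of_disjoint hd]
    have h1 : N \ A = N \ (N ∩ A) := (Finset.sdiff_inter_self_left N A).symm
    have h2 : (N ∩ A).card ≤ N.card := Finset.card_le_card Finset.inter_subset_left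
    rw [h1, Finset.card_sdiff_of_subset Finset.inter_subset_left]
    omega

lemma balance {c : ℕ} : ∀ (n : ℕ) (F : Fin c → Finset (Sym2 V)),
    (∑ i, (F i).card ^ 2 ≤ n) →
    (∀ i, IsM (F i)) →
    (∀ i j, i ≠ j → Disjoint (F i) (F j)) →
    ∃ F' : Fin c → Finset (Sym2 V),
      (∀ i, IsM (F' i)) ∧ (∀ i j, i ≠ j → Disjoint (F' i) (F' j)) ∧
      (Finset.univ.biUnion F' = Finset.univ.biUnion F) ∧
      (∀ i j, (F' i).card ≤ (F' j).card + 1) := by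
  intro n
  induction n using Nat.strong_induction_on with
  | _ n ih =>
    intro F hn hM hdisj
    by_cases hbal : ∀ i j, (F i).card ≤ (F j).card + 1
    · exact ⟨F, hM, hdisj, rfl, hbal⟩
    · push_neg at hbal
      obtain ⟨i, j, hij⟩ := hbal
      have hne : i ≠ j := by
        intro h; rw [h] at hij; omega
      obtain ⟨M', N', hM', hN', hdisj', huni', hcM', hcN'⟩ :=
        swap (F i) (F j) (hM i) (hM j) (hdisj i j hne) (by omega)
      set F' : Fin c → Finset (Sym2 V) :=
        Function.update (Function.update F i M') j N' with hF'
      have hF'i : F' i = M' := by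
        rw [hF', Function.update_of_ne hne, Function.update_self]
      have hF'j : F' j = N' := by rw [hF', Function.update_self]
      have hF't : ∀ t, t ≠ i → t ≠ j → F' t = F t := by
        intro t ht1 ht2
        rw [hF', Function.update_of_ne ht2, Function.update_of_ne ht1]
      -- measure decrease
      have hsum : (∑ t, (F' t).card ^ 2) + 2 ≤ ∑ t, (F t).card ^ 2 := by
        have hjmem : j ∈ (Finset.univ : Finset (Fin c)) := Finset.mem_univ j
        have himem : i ∈ (Finset.univ : Finset (Fin c)) \ {j} := by
          simp [hne]
        rw [← Finset.sum_erase_add _ _ hjmem, ← Finset.sum_erase_add _ _ hjmem]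
        have himem' : i ∈ (Finset.univ : Finset (Fin c)).erase j := by
          simp [hne]
        rw [← Finset.sum_erase_add _ _ himem', ← Finset.sum_erase_add _ _ himem']
        have hrest : ∑ t ∈ ((Finset.univ : Finset (Fin c)).erase j).erase i, (F' t).card ^ 2
            = ∑ t ∈ ((Finset.univ : Finset (Fin c)).erase j).erase i, (F t).card ^ 2 := by
          apply Finset.sum_congr rfl
          intro t ht
          rw [hF't t (Finset.ne_of_mem_erase ht) (Finset.ne_of_mem_erase (Finset.mem_of_mem_erase ht))]
        rw [hrest, hF'i, hF'j, hcM', hcN']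
        have hb2 : (F j).card + 2 ≤ (F i).card := by omega
        obtain ⟨d, hd⟩ := Nat.exists_eq_add_of_le hb2
        rw [hd]
        have h1 : (F j).card + 2 + d - 1 = (F j).card + 1 + d := by omega
        rw [h1]
        nlinarith [sq_nonneg ((F j).card + d)]
      have hlt : (∑ t, (F' t).card ^ 2) < n := by omega
      obtain ⟨F'', h1, h2, h3, h4⟩ := ih _ hlt F' (le_refl _)
        (by
          intro t
          by_cases ht1 : t = i
          · rw [ht1, hF'i]; exact hM'
          · by_cases ht2 : t = j
            · rw [ht2, hF'j]; exact hN'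
            · rw [hF't t ht1 ht2]; exact hM t)
        (by
          intro t t' htt
          have hMd : ∀ s, s ≠ i → s ≠ j → Disjoint M' (F s) := by
            intro s hs1 hs2
            have hd2 : Disjoint (F i ∪ F j) (F s) :=
              Finset.disjoint_union_left.mpr ⟨hdisj i s (Ne.symm hs1), hdisj j s (Ne.symm hs2)⟩
            exact hd2.mono_left (huni' ▸ Finset.subset_union_left)
          have hNd : ∀ s, s ≠ i → s ≠ j → Disjoint N' (F s) := by
            intro s hs1 hs2
            have hd2 : Disjoint (F i ∪ F j) (F s) :=
              Finset.disjoint_union_left.mpr ⟨hdisj i s (Ne.symm hs1), hdisj j s (Ne.symm hs2)⟩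
            exact hd2.mono_left (huni' ▸ Finset.subset_union_right)
          by_cases ht1 : t = i
          · subst ht1
            rw [hF'i]
            by_cases ht4 : t' = j
            · subst ht4; rw [hF'j]; exact hdisj'
            · rw [hF't t' (Ne.symm htt) ht4]; exact hMd t' (Ne.symm htt) ht4
          · by_cases ht2 : t = j
            · subst ht2
              rw [hF'j]
              by_cases ht3 : t' = i
              · subst ht3; rw [hF'i]; exact hdisj'.symm
              · rw [hF't t' ht3 (Ne.symm htt)]; exact hNd t' ht3 (Ne.symm htt)
            · rw [hF't t ht1 ht2]
              by_cases ht3 : t' = i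
              · subst ht3; rw [hF'i]; exact (hMd t ht1 ht2).symm
              · by_cases ht4 : t' = j
                · subst ht4; rw [hF'j]; exact (hNd t ht1 ht2).symm
                · rw [hF't t' ht3 ht4]; exact hdisj t t' htt)
      refine ⟨F'', h1, h2, ?_, h4⟩
      rw [h3]
      apply Finset.Subset.antisymm
      · intro z hz
        obtain ⟨t, -, hzt⟩ := Finset.mem_biUnion.mp hz
        by_cases ht1 : t = i
        · rw [ht1, hF'i] at hzt
          rcases Finset.mem_union.mp (huni' ▸ Finset.mem_union_left N' hzt) with h | h
          · exact Finset.mem_biUnion.mpr ⟨i, Finset.mem_univ i, h⟩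
          · exact Finset.mem_biUnion.mpr ⟨j, Finset.mem_univ j, h⟩
        · by_cases ht2 : t = j
          · rw [ht2, hF'j] at hzt
            rcases Finset.mem_union.mp (huni' ▸ Finset.mem_union_right M' hzt) with h | h
            · exact Finset.mem_biUnion.mpr ⟨i, Finset.mem_univ i, h⟩
            · exact Finset.mem_biUnion.mpr ⟨j, Finset.mem_univ j, h⟩
          · rw [hF't t ht1 ht2] at hzt
            exact Finset.mem_biUnion.mpr ⟨t, Finset.mem_univ t, hzt⟩
      · intro z hz
        obtain ⟨t, -, hzt⟩ := Finset.mem_biUnion.mp hz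
        by_cases ht1 : t = i
        · rw [ht1] at hzt
          rcases Finset.mem_union.mp (huni' ▸ Finset.mem_union_left (F j) hzt :
              z ∈ M' ∪ N') with h | h
          · exact Finset.mem_biUnion.mpr ⟨i, Finset.mem_univ i, hF'i ▸ h⟩
          · exact Finset.mem_biUnion.mpr ⟨j, Finset.mem_univ j, hF'j ▸ h⟩
        · by_cases ht2 : t = j
          · rw [ht2] at hzt
            rcases Finset.mem_union.mp (huni' ▸ Finset.mem_union_right (F i) hzt :
                z ∈ M' ∪ N') with h | h
            · exact Finset.mem_biUnion.mpr ⟨i, Finset.mem_univ i, hF'i ▸ h⟩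
            · exact Finset.mem_biUnion.mpr ⟨j, Finset.mem_univ j, hF'j ▸ h⟩
          · exact Finset.mem_biUnion.mpr ⟨t, Finset.mem_univ t, (hF't t ht1 ht2) ▸ hzt⟩

/-- generic level function from a list `P` with position-value `g`. -/
noncomputable def levg (P : List (Sym2 V)) (g : ℕ → ℕ) (x : Sym2 V) : ℕ :=
  ((Finset.range P.length).filter fun a => ∃ e, EdgesAdj e x ∧ P[a]? = some e).sup g

lemma levg_le {P : List (Sym2 V)} {g : ℕ → ℕ} {t : ℕ} (hg : ∀ a, a < P.length → g a ≤ t)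
    (x : Sym2 V) : levg P g x ≤ t := by
  apply Finset.sup_le
  intro a ha
  exact hg a (Finset.mem_range.mp (Finset.mem_filter.mp ha).1)

lemma le_levg {P : List (Sym2 V)} {g : ℕ → ℕ} {a : ℕ} {e x : Sym2 V}
    (hsome : P[a]? = some e) (hadj : EdgesAdj e x) : g a ≤ levg P g x := by
  apply Finset.le_sup
  refine Finset.mem_filter.mpr ⟨Finset.mem_range.mpr ?_, e, hadj, hsome⟩
  exact (List.getElem?_eq_some_iff.mp hsome).1

lemma levg_count (B : Finset (Sym2 V)) (hB : IsM B) (P : List (Sym2 V)) (g : ℕ → ℕ)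
    (ρ : ℕ) (hρ : 1 ≤ ρ) (T : Finset ℕ) (hT : ∀ a, a < P.length → ρ ≤ g a → a ∈ T) :
    (B.filter fun x => ρ ≤ levg P g x).card ≤ 2 * T.card := by
  have hsub : (B.filter fun x => ρ ≤ levg P g x) ⊆
      T.biUnion fun a => B.filter fun x => ∃ e, EdgesAdj e x ∧ P[a]? = some e := by
    intro x hx
    obtain ⟨hxB, hxρ⟩ := Finset.mem_filter.mp hx
    have hbot : (⊥ : ℕ) < ρ := by
      rw [Nat.bot_eq_zero]
      omega
    obtain ⟨a, ha, hga⟩ := (Finset.le_sup_iff hbot).mp hxρ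
    obtain ⟨har, e, hadj, hsome⟩ := Finset.mem_filter.mp ha
    refine Finset.mem_biUnion.mpr ⟨a, hT a (Finset.mem_range.mp har) hga, ?_⟩
    exact Finset.mem_filter.mpr ⟨hxB, e, hadj, hsome⟩
  calc (B.filter fun x => ρ ≤ levg P g x).card
      ≤ (T.biUnion fun a => B.filter fun x => ∃ e, EdgesAdj e x ∧ P[a]? = some e).card :=
        Finset.card_le_card hsub
    _ ≤ ∑ a ∈ T, (B.filter fun x => ∃ e, EdgesAdj e x ∧ P[a]? = some e).card :=
        Finset.card_biUnion_le
    _ ≤ ∑ _a ∈ T, 2 := by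
        apply Finset.sum_le_sum
        intro a _
        cases hsome : P[a]? with
        | none =>
            have hempty : (B.filter fun x => ∃ e, EdgesAdj e x ∧ P[a]? = some e) = ∅ := by
              apply Finset.filter_false_of_mem
              rintro x -
              rintro ⟨e, -, he⟩
              rw [hsome] at he
              exact (Option.some_ne_none e he.symm)
            simp [hempty]
        | some e =>
            have hsub2 : (B.filter fun x => ∃ e', EdgesAdj e' x ∧ some e = some e') ⊆
                B.filter fun x => EdgesAdj x e := by
              intro x hx
              obtain ⟨hxB, e', hadj, he'⟩ := Finset.mem_filter.mp hx
              obtain rfl : e = e' := by injection he'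
              exact Finset.mem_filter.mpr ⟨hxB, edgesAdj_symm hadj⟩
            exact le_trans (Finset.card_le_card hsub2) (card_adj_le_two B hB e)
    _ = 2 * T.card := by rw [Finset.sum_const, smul_eq_mul, Nat.mul_comm]

/-- Boundary condition between the end of `P` and the start of `Q`. -/
def Bdry (s : ℕ) (P Q : List (Sym2 V)) : Prop :=
  ∀ a b e e', P[a]? = some e → Q[b]? = some e' → EdgesAdj e e' → s ≤ (P.length - a) + b

def BlockProp (Fb : Finset (Sym2 V)) (Q : List (Sym2 V)) : Prop :=
  Q.Nodup ∧ Q.toFinset = Fb ∧ Q.length = Fb.card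

lemma buildBlocks (k c : ℕ) (hk : 2 ≤ k) (hc : 1 ≤ c)
    (F : Fin c → Finset (Sym2 V))
    (hM : ∀ i, IsM (F i))
    (hsize : ∀ i, 2 * k - 1 ≤ (F i).card) :
    ∃ QS : List (List (Sym2 V)), QS.length = c ∧
      (∀ b (hb : b < c), BlockProp (F ⟨b, hb⟩) (QS.getD b [])) ∧
      (∀ b, b + 1 < c → Bdry (k-1) (QS.getD b []) (QS.getD (b+1) [])) ∧
      (2 ≤ c → Bdry (k-1) (QS.getD (c-1) []) (QS.getD 0 [])) := by
  -- the one-block placement, parameterized by prev and first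
  have hplace : ∀ (i : ℕ) (hi : i < c) (prev first : List (Sym2 V)),
      ∃ Q : List (Sym2 V), BlockProp (F ⟨i, hi⟩) Q ∧
        Bdry (k-1) prev Q ∧ Bdry (k-1) Q first := by
    intro i hi prev first
    set B := F ⟨i, hi⟩ with hB
    have hmB : IsM B := hM _
    set l : Sym2 V → ℕ := levg prev (fun a => (k-1) - (prev.length - a)) with hl
    set u : Sym2 V → ℕ := levg first (fun b => (k-1) - (b+1)) with hu
    have hl1 : ∀ x ∈ B, l x ≤ k - 2 := by
      intro x _
      apply levg_le
      intro a ha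
      omega
    have hu1 : ∀ x ∈ B, u x ≤ k - 2 := by
      intro x _
      apply levg_le
      intro b hb
      omega
    have hl2 : ∀ ρ, 1 ≤ ρ → (B.filter fun x => ρ ≤ l x).card ≤ 2 * (k - 1 - ρ) := by
      intro ρ hρ
      have := levg_count B hmB prev (fun a => (k-1) - (prev.length - a)) ρ hρ
        (Finset.Ico (prev.length - ((k-1) - ρ)) prev.length)
        (by
          intro a ha hga
          have hga' : ρ ≤ (k-1) - (prev.length - a) := hga
          simp only [Finset.mem_Ico]
          omega)
      have hcard : (Finset.Ico (prev.length - ((k-1) - ρ)) prev.length).card ≤ k - 1 - ρ := by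
        rw [Nat.card_Ico]
        omega
      rw [← hl] at this
      omega
    have hu2 : ∀ ρ, 1 ≤ ρ → (B.filter fun x => ρ ≤ u x).card ≤ 2 * (k - 1 - ρ) := by
      intro ρ hρ
      have := levg_count B hmB first (fun b => (k-1) - (b+1)) ρ hρ
        (Finset.range ((k-1) - ρ))
        (by
          intro a ha hga
          have hga' : ρ ≤ (k-1) - (a+1) := hga
          simp only [Finset.mem_range]
          omega)
      have hcard : (Finset.range ((k-1) - ρ)).card ≤ k - 1 - ρ := by
        rw [Finset.card_range]
      rw [← hu] at this
      omega
    obtain ⟨Q, hnd, htf, hlen, hidx⟩ := placement B k hk (hsize _) l u hl1 hu1 hl2 hu2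
    refine ⟨Q, ⟨hnd, htf, hlen⟩, ?_, ?_⟩
    · intro a b e e' hPa hQb hadj
      have hblt : b < Q.length := (List.getElem?_eq_some_iff.mp hQb).1
      have hQbe : Q[b] = e' := (List.getElem?_eq_some_iff.mp hQb).2
      have hll := (hidx b hblt).1
      rw [hQbe] at hll
      have hle : (k-1) - (prev.length - a) ≤ l e' :=
        le_levg (g := fun a => (k-1) - (prev.length - a)) hPa hadj
      have halt : a < prev.length := (List.getElem?_eq_some_iff.mp hPa).1
      omega
    · intro a b e e' hQa hFb hadj
      have halt : a < Q.length := (List.getElem?_eq_some_iff.mp hQa).1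
      have hQae : Q[a] = e := (List.getElem?_eq_some_iff.mp hQa).2
      have hzz := (hidx a halt).2
      rw [hQae] at hzz
      have hle : (k-1) - (b+1) ≤ u e :=
        le_levg (g := fun b => (k-1) - (b+1)) hFb (edgesAdj_symm hadj)
      omega
  -- now build the list of blocks by induction
  have hbuild : ∀ j, 1 ≤ j → j ≤ c →
      ∃ QS : List (List (Sym2 V)), QS.length = j ∧
        (∀ b (hb : b < c), b < j → BlockProp (F ⟨b, hb⟩) (QS.getD b [])) ∧
        (∀ b, b + 1 < j → Bdry (k-1) (QS.getD b []) (QS.getD (b+1) [])) ∧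
        (j = c → 2 ≤ c → Bdry (k-1) (QS.getD (c-1) []) (QS.getD 0 [])) := by
    intro j
    induction j with
    | zero =>
        intro h
        exact absurd h (by omega)
    | succ j ihj =>
      intro _h hjc
      by_cases hj0 : j = 0
      · subst hj0
        obtain ⟨Q, hQ, -, -⟩ := hplace 0 (by omega) [] []
        refine ⟨[Q], rfl, ?_, ?_, ?_⟩
        · intro b hb hb1
          interval_cases b
          exact hQ
        · omega
        · intro h1 h2
          omega
      · have hj1 : 1 ≤ j := by omega
        obtain ⟨QS, hlen, hblocks, hbdry, -⟩ := ihj hj1 (by omega)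
        obtain ⟨Q, hQ, hQbd, hQwrap⟩ := hplace j (by omega) (QS.getD (j-1) []) (QS.getD 0 [])
        have hgd1 : ∀ b, b < j → (QS ++ [Q]).getD b [] = QS.getD b [] := by
          intro b hb
          rw [List.getD_eq_getElem?_getD, List.getD_eq_getElem?_getD, List.getElem?_append,
            if_pos (show b < QS.length by omega)]
        have hgd2 : (QS ++ [Q]).getD j [] = Q := by
          rw [List.getD_eq_getElem?_getD, List.getElem?_append, if_neg (by omega)]
          have hz : j - QS.length = 0 := by omega
          rw [hz]
          simp
        refine ⟨QS ++ [Q], by simp [hlen], ?_, ?_, ?_⟩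
        · intro b hb hbj
          by_cases hbj' : b < j
          · rw [hgd1 b hbj']
            exact hblocks b hb hbj'
          · have : b = j := by omega
            subst this
            rw [hgd2]
            exact hQ
        · intro b hbj
          by_cases hbj' : b + 1 < j
          · rw [hgd1 b (by omega), hgd1 (b+1) hbj']
            exact hbdry b hbj'
          · have hbeq : b + 1 = j := by omega
            have h1 : (QS ++ [Q]).getD (b+1) [] = Q := by
              rw [hbeq]
              exact hgd2
            rw [hgd1 b (by omega), h1]
            have h2 : QS.getD b [] = QS.getD (j-1) [] := by
              congr 1
              omega
            rw [h2]
            exact hQbd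
        · intro hceq h2
          have hc1 : c - 1 = j := by omega
          rw [hc1, hgd2, hgd1 0 (by omega)]
          exact hQwrap
  obtain ⟨QS, h1, h2, h3, h4⟩ := hbuild c hc le_rfl
  exact ⟨QS, h1, fun b hb => h2 b hb hb, h3, h4 rfl⟩


/-! ### Flatten and offsets -/

/-- offset of block `b` in the flattened list. -/
def off {α : Type*} (QS : List (List α)) (b : ℕ) : ℕ := ((QS.take b).map List.length).sum

lemma off_succ {α : Type*} (QS : List (List α)) (b : ℕ) (hb : b < QS.length) :
    off QS (b+1) = off QS b + (QS.getD b []).length := by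
  unfold off
  rw [List.take_succ, List.map_append, List.sum_append]
  congr 1
  rw [List.getElem?_eq_getElem hb]
  simp [List.getD_eq_getElem?_getD, List.getElem?_eq_getElem hb]

lemma off_mono {α : Type*} (QS : List (List α)) : Monotone (off QS) := by
  apply monotone_nat_of_le_succ
  intro b
  by_cases hb : b < QS.length
  · rw [off_succ QS b hb]
    omega
  · unfold off
    rw [List.take_of_length_le (by omega), List.take_of_length_le (by omega)]

lemma off_total {α : Type*} (QS : List (List α)) :
    off QS QS.length = QS.flatten.length := by
  unfold off
  rw [List.take_length, List.length_flatten]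

lemma flatten_decomp {α : Type*} : ∀ (QS : List (List α)) (v : ℕ), v < QS.flatten.length →
    ∃ b a, b < QS.length ∧ a < (QS.getD b []).length ∧
      v = off QS b + a ∧ QS.flatten[v]? = (QS.getD b [])[a]? := by
  intro QS
  induction QS with
  | nil =>
      intro v hv
      simp at hv
  | cons q QS ih =>
      intro v hv
      by_cases hvq : v < q.length
      · refine ⟨0, v, by simp, by simpa, by simp [off], ?_⟩
        rw [List.flatten_cons, List.getElem?_append, if_pos hvq]
        simp
      · have hv' : v - q.length < QS.flatten.length := by
          rw [List.flatten_cons, List.length_append] at hv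
          omega
        obtain ⟨b, a, h1, h2, h3, h4⟩ := ih (v - q.length) hv'
        refine ⟨b + 1, a, by simpa using h1, by simpa using h2, ?_, ?_⟩
        · have hoff : off (q :: QS) (b+1) = q.length + off QS b := by
            unfold off
            rw [List.take_succ_cons]
            simp
          omega
        · rw [List.flatten_cons, List.getElem?_append, if_neg (by omega)]
          simpa using h4

/-- The main construction: an ordering of the union of the `F i` where adjacent
edges are cyclically far apart. -/
lemma main_ordering (k c : ℕ) (hk : 2 ≤ k) (hc : 1 ≤ c)
    (F : Fin c → Finset (Sym2 V))
    (hM : ∀ i, IsM (F i))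
    (hdisjF : ∀ i j, i ≠ j → Disjoint (F i) (F j))
    (hsize : ∀ i, 2 * k - 1 ≤ (F i).card) :
    ∃ L : List (Sym2 V), L.Nodup ∧ (∀ e, e ∈ L ↔ ∃ i, e ∈ F i) ∧
      ∀ i j e e', i < j → L[i]? = some e → L[j]? = some e' → EdgesAdj e e' →
        (k-1) ≤ min (j - i) (L.length - (j - i)) := by
  obtain ⟨QS, hQSlen, hblocks, hbdry, hwrap⟩ := buildBlocks k c hk hc F hM hsize
  have hmemblock : ∀ b (hb : b < c) (x : Sym2 V), x ∈ QS.getD b [] ↔ x ∈ F ⟨b, hb⟩ := by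
    intro b hb x
    rw [← (hblocks b hb).2.1, List.mem_toFinset]
  have hlenblock : ∀ b, b < c → 2 * k - 1 ≤ (QS.getD b []).length := by
    intro b hb
    rw [(hblocks b hb).2.2]
    exact hsize _
  refine ⟨QS.flatten, ?_, ?_, ?_⟩
  · -- nodup
    rw [List.nodup_flatten]
    constructor
    · intro l hl
      obtain ⟨b, hb, rfl⟩ := List.mem_iff_getElem.mp hl
      have : QS[b] = QS.getD b [] := (List.getD_eq_getElem QS [] hb).symm
      rw [this]
      exact (hblocks b (hQSlen ▸ hb)).1
    · rw [List.pairwise_iff_getElem]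
      intro b b' hb hb' hbb'
      intro x hx hx'
      have hgb : QS[b] = QS.getD b [] := (List.getD_eq_getElem QS [] hb).symm
      have hgb' : QS[b'] = QS.getD b' [] := (List.getD_eq_getElem QS [] hb').symm
      rw [hgb] at hx
      rw [hgb'] at hx'
      have hbc : b < c := hQSlen ▸ hb
      have hbc' : b' < c := hQSlen ▸ hb'
      have h1 : x ∈ F ⟨b, hbc⟩ := (hmemblock b hbc x).mp hx
      have h2 : x ∈ F ⟨b', hbc'⟩ := (hmemblock b' hbc' x).mp hx'
      exact (hdisjF ⟨b, hbc⟩ ⟨b', hbc'⟩ (by simp [Fin.ext_iff]; omega)).forall_ne_finset h1 h2 rfl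
  · -- membership
    intro e
    rw [List.mem_flatten]
    constructor
    · rintro ⟨l, hl, hel⟩
      obtain ⟨b, hb, rfl⟩ := List.mem_iff_getElem.mp hl
      have hgb : QS[b] = QS.getD b [] := (List.getD_eq_getElem QS [] hb).symm
      rw [hgb] at hel
      exact ⟨⟨b, hQSlen ▸ hb⟩, (hmemblock b (hQSlen ▸ hb) e).mp hel⟩
    · rintro ⟨i, hi⟩
      have hb : (i : ℕ) < QS.length := hQSlen ▸ i.isLt
      refine ⟨QS.getD i [], ?_, ?_⟩
      · rw [List.getD_eq_getElem QS [] hb]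
        exact List.getElem_mem hb
      · exact (hmemblock i i.isLt e).mpr (by simpa using hi)
  · -- the distance property
    intro i j e e' hij hi hj hadj
    have hjlt : j < QS.flatten.length := (List.getElem?_eq_some_iff.mp hj).1
    have hilt : i < QS.flatten.length := by omega
    obtain ⟨b, a, hbq, ha, hioff, hie⟩ := flatten_decomp QS i hilt
    obtain ⟨b', a', hbq', ha', hjoff, hje⟩ := flatten_decomp QS j hjlt
    have hbc : b < c := hQSlen ▸ hbq
    have hbc' : b' < c := hQSlen ▸ hbq'
    rw [hie] at hi
    rw [hje] at hj
    -- b ≤ b'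
    have hoffstep : ∀ t, t < c → off QS (t+1) = off QS t + (QS.getD t []).length := by
      intro t ht
      exact off_succ QS t (hQSlen ▸ ht)
    have hstepb := hoffstep b hbc
    have hstepb' := hoffstep b' hbc'
    have hble : b ≤ b' := by
      by_contra hcon
      have h2 : off QS (b'+1) ≤ off QS b := off_mono QS (by omega)
      omega
    have hmtot : off QS c = QS.flatten.length := by
      rw [← hQSlen]
      exact off_total QS
    by_cases hbb : b = b'
    · -- same block: contradiction
      exfalso
      subst hbb
      have he1 : e ∈ QS.getD b [] := by
        have := (List.getElem?_eq_some_iff.mp hi).2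
        rw [← this]
        exact List.getElem_mem _
      have he2 : e' ∈ QS.getD b [] := by
        have := (List.getElem?_eq_some_iff.mp hj).2
        rw [← this]
        exact List.getElem_mem _
      exact hM ⟨b, hbc⟩ e ((hmemblock b hbc e).mp he1) e' ((hmemblock b hbc e').mp he2) hadj
    · have hblt : b < b' := by omega
      have hc2 : 2 ≤ c := by omega
      -- forward distance
      have hforward : k - 1 ≤ j - i := by
        by_cases hb1 : b' = b + 1
        · have hbd := hbdry b (by omega) a a' e e' hi (by rw [← hb1]; exact hj) hadj
          have hoffb' : off QS b' = off QS (b+1) := by rw [hb1]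
          omega
        · -- an intervening block
          have hint : b + 1 < b' := by omega
          have h2 : off QS (b+2) ≤ off QS b' := off_mono QS (by omega)
          have hstepb1 : off QS (b+2) = off QS (b+1) + (QS.getD (b+1) []).length :=
            hoffstep (b+1) (by omega)
          have hlen1 := hlenblock (b+1) (by omega)
          omega
      -- backward distance
      have hbackward : k - 1 ≤ QS.flatten.length - (j - i) := by
        by_cases hwc : b = 0 ∧ b' = c - 1
        · obtain ⟨hb0, hbc1⟩ := hwc
          subst hb0
          subst hbc1
          have hw := hwrap hc2 a' a e' e hj hi (edgesAdj_symm hadj)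
          have hstepc1 : off QS (c-1+1) = off QS (c-1) + (QS.getD (c-1) []).length :=
            hoffstep (c-1) (by omega)
          have hc1c : c - 1 + 1 = c := by omega
          rw [hc1c] at hstepc1
          have hoff0 : off QS 0 = 0 := rfl
          omega
        · by_cases hb0 : 1 ≤ b
          · have h1 : off QS 1 ≤ off QS b := off_mono QS (by omega)
            have hstep0 : off QS 1 = off QS 0 + (QS.getD 0 []).length := hoffstep 0 (by omega)
            have hlen0 := hlenblock 0 (by omega)
            have hoff0 : off QS 0 = 0 := rfl
            omega
          · -- b = 0, b' ≤ c - 2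
            have hb00 : b = 0 := by omega
            subst hb00
            have hoff0 : off QS 0 = 0 := rfl
            have hb'ne : b' ≠ c - 1 := by
              intro hcon
              exact hwc ⟨rfl, hcon⟩
            have hb'le : b' + 1 ≤ c - 1 := by omega
            have h1 : off QS (b'+1) ≤ off QS (c-1) := off_mono QS (by omega)
            have hstepc1 := hoffstep (c-1) (by omega)
            have hc1c : c - 1 + 1 = c := by omega
            rw [hc1c] at hstepc1
            have hlenc1 := hlenblock (c-1) (by omega)
            omega
      omega

/-- The master lemma. -/
lemma master {V : Type*} [Fintype V] (H : SimpleGraph V)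
    (hne : H.edgeSet.Nonempty) :
    numEdges H / (2 * chromaticIndex H) - 1 ≤ cms H := by
  classical
  set m := numEdges H with hm
  set c := chromaticIndex H with hc
  -- the finite edge set
  have hEfin : H.edgeSet.Finite := Set.toFinite _
  set Efin := hEfin.toFinset with hEfin'
  have hmE : m = Efin.card := by
    rw [hm]
    unfold numEdges
    rw [Nat.card_coe_set_eq, Set.ncard_eq_toFinset_card H.edgeSet hEfin]
  -- a proper colouring with c colours exists
  have hSne : {n | ∃ f : H.edgeSet → Fin n,
      ∀ e e' : H.edgeSet, EdgesAdj e.1 e'.1 → f e ≠ f e'}.Nonempty := by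
    haveI : Fintype ↥H.edgeSet := hEfin.fintype
    refine ⟨Fintype.card ↥H.edgeSet, Fintype.equivFin ↥H.edgeSet, ?_⟩
    intro e e' hadj
    intro hcon
    exact hadj.1 (congrArg Subtype.val ((Fintype.equivFin ↥H.edgeSet).injective hcon))
  obtain ⟨f, hf⟩ : ∃ f : H.edgeSet → Fin c,
      ∀ e e' : H.edgeSet, EdgesAdj e.1 e'.1 → f e ≠ f e' := by
    rw [hc]
    unfold chromaticIndex
    exact Nat.sInf_mem hSne
  -- `c ≥ 1`
  have hc1 : 1 ≤ c := by
    by_contra hcon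
    obtain ⟨e, he⟩ := hne
    have hx := (f ⟨e, he⟩).isLt
    omega
  -- the trivial case
  by_cases hk2 : m / (2 * c) < 2
  · have : m / (2 * c) - 1 = 0 := by omega
    rw [this]
    exact Nat.zero_le _
  push_neg at hk2
  set k := m / (2 * c) with hkdef
  -- the initial colour classes
  set F₀ : Fin c → Finset (Sym2 V) :=
    fun i => Efin.filter fun e => ∃ h : e ∈ H.edgeSet, f ⟨e, h⟩ = i with hF₀
  have hF₀M : ∀ i, IsM (F₀ i) := by
    intro i e he e' he' hadj
    obtain ⟨heE, h1, hv1⟩ := Finset.mem_filter.mp he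
    obtain ⟨heE', h2, hv2⟩ := Finset.mem_filter.mp he'
    exact hf ⟨e, h1⟩ ⟨e', h2⟩ hadj (by rw [hv1, hv2])
  have hF₀disj : ∀ i j, i ≠ j → Disjoint (F₀ i) (F₀ j) := by
    intro i j hij
    rw [Finset.disjoint_left]
    intro e he he'
    obtain ⟨-, h1, hv1⟩ := Finset.mem_filter.mp he
    obtain ⟨-, h2, hv2⟩ := Finset.mem_filter.mp he'
    exact hij (by rw [← hv1, ← hv2])
  have hF₀uni : Finset.univ.biUnion F₀ = Efin := by
    apply Finset.Subset.antisymm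
    · intro e he
      obtain ⟨i, -, hei⟩ := Finset.mem_biUnion.mp he
      exact (Finset.mem_filter.mp hei).1
    · intro e he
      have heE : e ∈ H.edgeSet := (Set.Finite.mem_toFinset hEfin).mp he
      exact Finset.mem_biUnion.mpr ⟨f ⟨e, heE⟩, Finset.mem_univ _,
        Finset.mem_filter.mpr ⟨he, heE, rfl⟩⟩
  -- balance the classes
  obtain ⟨F, hFM, hFdisj, hFuni, hFbal⟩ :=
    balance (V := V) (c := c) (∑ i, (F₀ i).card ^ 2) F₀ le_rfl hF₀M hF₀disj
  rw [hF₀uni] at hFuni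
  -- sizes
  have hsumF : ∑ i, (F i).card = m := by
    rw [hmE, ← hFuni]
    exact (Finset.card_biUnion fun i _ j _ hij => hFdisj i j hij).symm
  have h2ck : 2 * c * k ≤ m := by
    rw [hkdef]
    rw [Nat.mul_comm]
    exact Nat.div_mul_le_self m (2 * c)
  have hsize : ∀ i, 2 * k - 1 ≤ (F i).card := by
    intro i
    have hbound : m ≤ c * ((F i).card + 1) := by
      calc m = ∑ j, (F j).card := hsumF.symm
        _ ≤ ∑ _j : Fin c, ((F i).card + 1) := Finset.sum_le_sum fun j _ => hFbal j i
        _ = c * ((F i).card + 1) := by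
            rw [Finset.sum_const, Finset.card_univ, Fintype.card_fin, smul_eq_mul]
    have : c * (2 * k) ≤ c * ((F i).card + 1) := by
      calc c * (2 * k) = 2 * c * k := by ring
        _ ≤ m := h2ck
        _ ≤ c * ((F i).card + 1) := hbound
    have := Nat.le_of_mul_le_mul_left this (by omega : 0 < c)
    omega
  -- the main construction
  obtain ⟨L, hnd, hLmem, hLprop⟩ :=
    main_ordering k c hk2 hc1 F hFM hFdisj hsize
  -- L is an ordering of H
  have hmemiff : ∀ e, e ∈ L ↔ e ∈ H.edgeSet := by
    intro e
    rw [hLmem e]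
    constructor
    · rintro ⟨i, hi⟩
      have : e ∈ Finset.univ.biUnion F := Finset.mem_biUnion.mpr ⟨i, Finset.mem_univ _, hi⟩
      rw [hFuni] at this
      exact (Set.Finite.mem_toFinset hEfin).mp this
    · intro he
      have : e ∈ Finset.univ.biUnion F := by
        rw [hFuni]
        exact (Set.Finite.mem_toFinset hEfin).mpr he
      obtain ⟨i, -, hi⟩ := Finset.mem_biUnion.mp this
      exact ⟨i, hi⟩
  have hord : IsOrdering H L := ⟨hnd, hmemiff⟩
  -- L has length m
  have hlenL : L.length = m := by
    have h1 : L.toFinset = Efin := by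
      ext e
      rw [List.mem_toFinset, hmemiff e, Set.Finite.mem_toFinset]
    rw [← List.toFinset_card_of_nodup hnd, h1, hmE]
  -- cmsList L ≥ k - 1
  have hcmsList : k - 1 ≤ cmsList L := by
    unfold cmsList
    apply le_csSup
    · exact ⟨L.length, fun x hx => hx.2.1⟩
    · refine ⟨by omega, ?_, ?_⟩
      · have : k ≤ m := by
          rw [hkdef]
          exact Nat.div_le_self _ _
        omega
      · exact hLprop
  -- cms H ≥ cmsList L
  have hcms : cmsList L ≤ cms H := by
    unfold cms
    apply le_csSup
    · refine ⟨m, ?_⟩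
      rintro x ⟨L', hord', rfl⟩
      have hlen' : L'.length = m := by
        have h1 : L'.toFinset = Efin := by
          ext e
          rw [List.mem_toFinset, hord'.2 e, Set.Finite.mem_toFinset]
        rw [← List.toFinset_card_of_nodup hord'.1, h1, hmE]
      unfold cmsList
      apply csSup_le'
      rintro y ⟨-, hy, -⟩
      omega
    · exact ⟨L, hord, rfl⟩
  calc m / (2 * c) - 1 = k - 1 := by rw [hkdef]
    _ ≤ cmsList L := hcmsList
    _ ≤ cms H := hcms

end CMSAux

/-- For any graph `H` with at least one edge and chromatic index `c`,
`cms(H) ≥ ⌊|E(H)|/(2c)⌋ - 1`. -/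
theorem cms_ge_floor_div_two_chromaticIndex {V : Type*} [Fintype V] (H : SimpleGraph V)
    (hne : H.edgeSet.Nonempty) :
    numEdges H / (2 * chromaticIndex H) - 1 ≤ cms H := by
  exact CMSAux.master H hne
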